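/- Let s be a positive integer, let ρ = (ρ_1, …, ρ_m) be a vector of integers between 1 and s−1 of length m ≥ 1, and let n ≥ 1, r ≥ 0, c ≥ 0 be integers. Then the number of partitions λ of n with rem_s(λ) = ρ, r_s(λ) = r and c_s(λ) = c equals the number of pairs (γ, μ), where γ = (γ_1, …, γ_m) is a strictly increasing sequence of positive integers and μ is a (possibly empty) partition all of whose parts are divisible by s, such that n = |μ| + (ρ_1 + … + ρ_m) + s·∑_{j=1}^m d_j (γ_j − 1) with (d_1, …, d_m) = d(ρ, γ), and either (μ is empty, c = 0 and r = γ_m − m) or (μ is non-empty, c = μ_1/s and r = max(γ_m, ℓ(μ)) − m). -/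

import Mathlib

/-- A partition: a weakly decreasing list of positive integers. -/
def IsPartition (l : List ℕ) : Prop :=
  l.Pairwise (· ≥ ·) ∧ ∀ x ∈ l, 0 < x

/-- `r_s(λ)`: the number of parts of `λ` divisible by `s`. -/
def partRs (s : ℕ) (l : List ℕ) : ℕ := l.countP (fun x => decide (x % s = 0))

/-- `c_s(λ)`: the number of cells `(i, j)` of the Ferrers diagram of `λ`
with leg length zero and arm length plus one divisible by `s`. -/
def partCs (s : ℕ) (l : List ℕ) : ℕ :=
  ∑ i ∈ Finset.range l.length,
    ((Finset.Icc 1 (l.getD i 0)).filter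
      (fun j => l.getD (i + 1) 0 < j ∧ (l.getD i 0 - j + 1) % s = 0)).card

/-- `rem_s(λ)`: the sequence of non-zero remainders of the parts of `λ`
upon division by `s`, in the order of the parts. -/
def partRem (s : ℕ) (l : List ℕ) : List ℕ :=
  (l.map (fun x => x % s)).filter (fun x => decide (x ≠ 0))

/-- `d(ρ, γ)_j` for the 0-indexed position `j` (corresponding to the 1-indexed
position `j + 1`): it is `0` if `j ≥ 1`, `ρ_j ≥ ρ_{j+1}` and `γ_{j+1} = γ_j + 1`
(1-indexed), and `1` otherwise. -/
def dseq (ρ γ : List ℕ) (j : ℕ) : ℕ :=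
  if 0 < j ∧ ρ.getD j 0 ≤ ρ.getD (j - 1) 0 ∧ γ.getD j 0 = γ.getD (j - 1) 0 + 1
  then 0 else 1


/-- number of indices j with d_j = 1 and γ_j > t -/
def Ac (ρ γ : List ℕ) (t : ℕ) : ℕ :=
  ((Finset.range γ.length).filter (fun j => dseq ρ γ j = 1 ∧ t < γ.getD j 0)).card

/-- the remainder attached to 1-indexed position t -/
def rt (ρ γ : List ℕ) (t : ℕ) : ℕ := ρ.getD (γ.idxOf t) 0

def gv (s : ℕ) (ρ γ μ : List ℕ) (i : ℕ) : ℕ :=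
  μ.getD i 0 + s * Ac ρ γ (i + 1) + rt ρ γ (i + 1)

def Lg (γ μ : List ℕ) : ℕ := max (γ.getD (γ.length - 1) 0) μ.length

def gmap (s : ℕ) (ρ γ μ : List ℕ) : List ℕ := (List.range (Lg γ μ)).map (gv s ρ γ μ)

section helpers

lemma getD_anti {l : List ℕ} (h : l.Pairwise (· ≥ ·)) : Antitone (fun i => l.getD i 0) := by
  apply antitone_nat_of_succ_le
  intro i
  rcases lt_or_ge (i+1) l.length with hi | hi
  · rw [List.getD_eq_getElem _ _ hi, List.getD_eq_getElem _ _ (by omega)]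
    exact (List.pairwise_iff_getElem.1 h) i (i+1) (by omega) hi (by omega)
  · rw [List.getD_eq_default _ _ hi]; exact Nat.zero_le _

lemma sum_list_range (f : ℕ → ℕ) (N : ℕ) :
    ((List.range N).map f).sum = ∑ i ∈ Finset.range N, f i := by
  induction N with
  | zero => simp
  | succ N ih => rw [List.range_succ, Finset.sum_range_succ, List.map_append, List.sum_append, ih]; simp

lemma sum_range_getD (l : List ℕ) {N : ℕ} (h : l.length ≤ N) :
    ∑ i ∈ Finset.range N, l.getD i 0 = l.sum := by
  induction N with
  | zero => interval_cases hl : l.length; rw [List.length_eq_zero_iff] at hl; simp [hl]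
  | succ N ih =>
    rcases lt_or_ge l.length (N+1) with h' | h'
    · rw [Finset.sum_range_succ, List.getD_eq_default _ _ (by omega), ih (by omega), add_zero]
    · have hl : l.length = N + 1 := le_antisymm h h'
      have : l = (List.range (N+1)).map (fun i => l.getD i 0) := by
        apply List.ext_getElem (by simp [hl])
        intro n h1 h2
        rw [List.getElem_map, List.getElem_range, List.getD_eq_getElem _ _ h1]
      conv_rhs => rw [this]
      rw [sum_list_range]

end helpers



section gam
variable {s : ℕ} {ρ γ : List ℕ} {t j k : ℕ}

lemma gam_mono (hγ : γ.Pairwise (· < ·)) (hjk : j < k) (hk : k < γ.length) :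
    γ.getD j 0 < γ.getD k 0 := by
  rw [List.getD_eq_getElem _ _ (by omega), List.getD_eq_getElem _ _ hk]
  exact List.pairwise_iff_getElem.1 hγ _ _ (by omega) hk hjk

lemma gam_inj (hγ : γ.Pairwise (· < ·)) (hj : j < γ.length) (hk : k < γ.length)
    (h : γ.getD j 0 = γ.getD k 0) : j = k := by
  rcases lt_trichotomy j k with h' | h' | h'
  · have := gam_mono hγ h' hk; omega
  · exact h'
  · have := gam_mono hγ h' hj; omega

lemma gam_pos (hγp : ∀ x ∈ γ, 0 < x) (hj : j < γ.length) : 0 < γ.getD j 0 := by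
  rw [List.getD_eq_getElem _ _ hj]; exact hγp _ (List.getElem_mem _)

lemma gam_ge (hγ : γ.Pairwise (· < ·)) (hγp : ∀ x ∈ γ, 0 < x) (hj : j < γ.length) :
    j + 1 ≤ γ.getD j 0 := by
  induction j with
  | zero => exact gam_pos hγp hj
  | succ j ih =>
    have h1 := gam_mono hγ (by omega : j < j + 1) hj
    have h2 := ih (by omega)
    omega

lemma gam_le_last (hγ : γ.Pairwise (· < ·)) (hj : j < γ.length) :
    γ.getD j 0 ≤ γ.getD (γ.length - 1) 0 := by
  rcases eq_or_lt_of_le (by omega : j ≤ γ.length - 1) with h | h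
  · rw [h]
  · exact le_of_lt (gam_mono hγ h (by omega))

lemma gam_mem_iff : t ∈ γ ↔ ∃ j, j < γ.length ∧ γ.getD j 0 = t := by
  rw [List.mem_iff_getElem]
  constructor
  · rintro ⟨j, hj, h⟩; exact ⟨j, hj, by rw [List.getD_eq_getElem _ _ hj, h]⟩
  · rintro ⟨j, hj, h⟩; exact ⟨j, hj, by rw [← List.getD_eq_getElem _ _ hj, h]⟩

lemma gam_nodup (hγ : γ.Pairwise (· < ·)) : γ.Nodup := hγ.nodup

lemma gam_mem_le_last (hγ : γ.Pairwise (· < ·)) (h : t ∈ γ) :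
    t ≤ γ.getD (γ.length - 1) 0 := by
  obtain ⟨j, hj, rfl⟩ := gam_mem_iff.1 h
  exact gam_le_last hγ hj

lemma gam_adj (hγ : γ.Pairwise (· < ·)) (hj : j < γ.length) (hk : k < γ.length)
    (h : γ.getD j 0 + 1 = γ.getD k 0) : j + 1 = k := by
  have hjk : j < k := by
    rcases lt_trichotomy j k with h' | h' | h'
    · exact h'
    · subst h'; omega
    · have := gam_mono hγ h' hj; omega
  by_contra hne
  have h2 : j + 1 < k := by omega
  have h3 := gam_mono hγ (by omega : j < j + 1) (by omega : j + 1 < γ.length)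
  have h4 := gam_mono hγ h2 hk
  omega

lemma rt_of_mem (hγ : γ.Pairwise (· < ·)) (hj : j < γ.length) :
    rt ρ γ (γ.getD j 0) = ρ.getD j 0 := by
  unfold rt
  rw [List.getD_eq_getElem _ _ hj, (gam_nodup hγ).idxOf_getElem]

lemma rt_of_not_mem (hlen : γ.length = ρ.length) (h : t ∉ γ) : rt ρ γ t = 0 := by
  unfold rt
  rw [List.idxOf_eq_length h, List.getD_eq_default _ _ (by omega)]

lemma rt_mem (hlen : γ.length = ρ.length) (h : t ∈ γ) : rt ρ γ t ∈ ρ := by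
  unfold rt
  have h1 : γ.idxOf t < γ.length := List.idxOf_lt_length_iff.2 h
  rw [List.getD_eq_getElem _ _ (by omega)]
  exact List.getElem_mem _

lemma rt_lt (hs : 0 < s) (hρ1 : ∀ x ∈ ρ, 1 ≤ x ∧ x ≤ s - 1)
    (hlen : γ.length = ρ.length) : rt ρ γ t < s := by
  by_cases h : t ∈ γ
  · have := hρ1 _ (rt_mem hlen h); omega
  · rw [rt_of_not_mem hlen h]; omega

lemma rt_pos (hρ1 : ∀ x ∈ ρ, 1 ≤ x ∧ x ≤ s - 1) (hlen : γ.length = ρ.length)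
    (h : t ∈ γ) : 0 < rt ρ γ t := by
  have := hρ1 _ (rt_mem hlen h); omega

lemma rt_pos_iff (hρ1 : ∀ x ∈ ρ, 1 ≤ x ∧ x ≤ s - 1) (hlen : γ.length = ρ.length) :
    0 < rt ρ γ t ↔ t ∈ γ := by
  constructor
  · intro h; by_contra h'; rw [rt_of_not_mem hlen h'] at h; omega
  · exact rt_pos hρ1 hlen

lemma Ac_anti : Antitone (Ac ρ γ) := by
  intro a b hab
  apply Finset.card_le_card
  intro j hj
  simp only [Finset.mem_filter] at hj ⊢
  exact ⟨hj.1, hj.2.1, by omega⟩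

lemma Ac_le_of_gam_le (hγ : γ.Pairwise (· < ·)) (h : γ.getD (γ.length - 1) 0 ≤ t) :
    Ac ρ γ t = 0 := by
  unfold Ac
  rw [Finset.card_eq_zero, Finset.filter_eq_empty_iff]
  intro j hj
  simp only [Finset.mem_range] at hj
  have := gam_le_last hγ hj
  simp only [not_and]
  intro _
  omega

lemma Ac_succ (hγ : γ.Pairwise (· < ·)) :
    Ac ρ γ t = Ac ρ γ (t + 1) +
      (if ∃ j, j < γ.length ∧ γ.getD j 0 = t + 1 ∧ dseq ρ γ j = 1 then 1 else 0) := by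
  unfold Ac
  have hsplit : (Finset.range γ.length).filter (fun j => dseq ρ γ j = 1 ∧ t < γ.getD j 0)
      = ((Finset.range γ.length).filter (fun j => dseq ρ γ j = 1 ∧ t + 1 < γ.getD j 0)) ∪
        ((Finset.range γ.length).filter (fun j => γ.getD j 0 = t + 1 ∧ dseq ρ γ j = 1)) := by
    ext j
    simp only [Finset.mem_filter, Finset.mem_union, Finset.mem_range]
    constructor
    · rintro ⟨h1, h2, h3⟩
      rcases eq_or_lt_of_le (by omega : t + 1 ≤ γ.getD j 0) with h4 | h4
      · exact Or.inr ⟨h1, h4.symm, h2⟩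
      · exact Or.inl ⟨h1, h2, h4⟩
    · rintro (⟨h1, h2, h3⟩ | ⟨h1, h2, h3⟩)
      · exact ⟨h1, h2, by omega⟩
      · exact ⟨h1, h3, by omega⟩
  rw [hsplit, Finset.card_union_of_disjoint]
  · congr 1
    by_cases h : ∃ j, j < γ.length ∧ γ.getD j 0 = t + 1 ∧ dseq ρ γ j = 1
    · obtain ⟨j0, hj0, hg0, hd0⟩ := h
      rw [if_pos ⟨j0, hj0, hg0, hd0⟩]
      rw [show ((Finset.range γ.length).filter (fun j => γ.getD j 0 = t + 1 ∧ dseq ρ γ j = 1)) = {j0} from ?_]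
      · simp
      · ext j
        simp only [Finset.mem_filter, Finset.mem_range, Finset.mem_singleton]
        constructor
        · rintro ⟨h1, h2, h3⟩
          exact gam_inj hγ h1 hj0 (by omega)
        · rintro rfl
          exact ⟨hj0, hg0, hd0⟩
    · rw [if_neg h]
      rw [Finset.card_eq_zero, Finset.filter_eq_empty_iff]
      intro j hj
      simp only [Finset.mem_range] at hj
      intro hc
      exact h ⟨j, hj, hc.1, hc.2⟩
  · rw [Finset.disjoint_filter]
    intro j _ h1 h2
    omega

end gam


section dseqlem
variable {ρ γ : List ℕ} {j : ℕ}

lemma dseq_zero : dseq ρ γ 0 = 1 := by simp [dseq]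

lemma dseq_eq_zero_iff : dseq ρ γ j = 0 ↔
    (0 < j ∧ ρ.getD j 0 ≤ ρ.getD (j - 1) 0 ∧ γ.getD j 0 = γ.getD (j - 1) 0 + 1) := by
  unfold dseq
  split <;> simp_all

lemma dseq_eq_one_iff : dseq ρ γ j = 1 ↔
    ¬(0 < j ∧ ρ.getD j 0 ≤ ρ.getD (j - 1) 0 ∧ γ.getD j 0 = γ.getD (j - 1) 0 + 1) := by
  unfold dseq
  split <;> simp_all

lemma dseq_cases : dseq ρ γ j = 0 ∨ dseq ρ γ j = 1 := by
  unfold dseq; split <;> simp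

end dseqlem

lemma card_arm (s a a' : ℕ) (hs : 0 < s) (h : a' ≤ a) :
    ((Finset.Icc 1 a).filter (fun j => a' < j ∧ (a - j + 1) % s = 0)).card = (a - a') / s := by
  rw [← Nat.card_multiples (a - a') s]
  apply Finset.card_nbij' (i := fun j => a - j) (j := fun k => a - k)
  · intro x hx
    simp only [Finset.mem_coe, Finset.mem_filter, Finset.mem_Icc, Finset.mem_range] at hx ⊢
    obtain ⟨⟨h1, h2⟩, h3, h4⟩ := hx
    refine ⟨by omega, ?_⟩
    rw [Nat.dvd_iff_mod_eq_zero]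
    exact h4
  · intro k hk
    simp only [Finset.mem_coe, Finset.mem_filter, Finset.mem_Icc, Finset.mem_range] at hk ⊢
    obtain ⟨h1, h2⟩ := hk
    rw [Nat.dvd_iff_mod_eq_zero] at h2
    refine ⟨⟨by omega, by omega⟩, by omega, ?_⟩
    rw [show a - (a - k) + 1 = k + 1 by omega]
    exact h2
  · intro x hx
    simp only [Finset.mem_coe, Finset.mem_filter, Finset.mem_Icc] at hx
    dsimp only
    omega
  · intro k hk
    simp only [Finset.mem_coe, Finset.mem_filter, Finset.mem_range] at hk
    dsimp only
    omega

lemma mod_lt_iff {s : ℕ} (x y : ℕ) (hx : x < s) (hy : y < s) :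
    (x + y) % s < x ↔ s ≤ x + y := by
  by_cases h : s ≤ x + y
  · rw [Nat.mod_eq_sub_mod h, Nat.mod_eq_of_lt (by omega)]
    constructor <;> intro <;> omega
  · rw [Nat.mod_eq_of_lt (by omega)]
    constructor <;> intro <;> omega

lemma div_split (s a a' : ℕ) (hs : 0 < s) (h : a' ≤ a) :
    a / s = a' / s + (a - a') / s + (if a % s < a' % s then 1 else 0) := by
  obtain ⟨b, rfl⟩ : ∃ b, a = a' + b := ⟨a - a', by omega⟩
  rw [Nat.add_div hs]
  rw [show a' + b - a' = b by omega]
  congr 1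
  rw [Nat.add_mod]
  have hx : a' % s < s := Nat.mod_lt _ hs
  have hy : b % s < s := Nat.mod_lt _ hs
  by_cases hc : s ≤ a' % s + b % s
  · rw [if_pos ((mod_lt_iff _ _ hx hy).2 hc), if_pos hc]
  · rw [if_neg (fun hcc => hc ((mod_lt_iff _ _ hx hy).1 hcc)), if_neg hc]

lemma telescope (s : ℕ) (hs : 0 < s) (f : ℕ → ℕ) (N : ℕ)
    (hanti : ∀ i, f (i + 1) ≤ f i) (hN : f N = 0) :
    (∑ i ∈ Finset.range N, (f i - f (i + 1)) / s) +
      ((Finset.range N).filter (fun i => f i % s < f (i + 1) % s)).card = f 0 / s := by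
  induction N generalizing f with
  | zero => simp [hN]
  | succ N ih =>
    have hrec := ih (fun i => f (i + 1)) (fun i => hanti (i + 1)) hN
    rw [Finset.sum_range_succ', Finset.card_filter, Finset.sum_range_succ',
      ← Finset.card_filter]
    simp only [Nat.zero_add] at hrec ⊢
    have hds := div_split s (f 0) (f 1) hs (hanti 0)
    by_cases hc : f 0 % s < f 1 % s
    · rw [if_pos hc] at hds ⊢
      omega
    · rw [if_neg hc] at hds ⊢
      omega

lemma partCs_eq (s : ℕ) (hs : 0 < s) (l : List ℕ) (hsort : l.Pairwise (· ≥ ·)) :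
    partCs s l + ((Finset.range l.length).filter
      (fun i => l.getD i 0 % s < l.getD (i + 1) 0 % s)).card = l.getD 0 0 / s := by
  have hanti := getD_anti hsort
  unfold partCs
  rw [Finset.sum_congr rfl (fun i _ => card_arm s _ _ hs (hanti (by omega : i ≤ i + 1)))]
  exact telescope s hs (fun i => l.getD i 0) l.length (fun i => hanti (by omega))
    (List.getD_eq_default _ _ le_rfl)
section gvlem
variable {s : ℕ} {ρ γ μ : List ℕ} {i t j : ℕ}

lemma sdvd_getD (hμd : ∀ x ∈ μ, s ∣ x) (i : ℕ) : s ∣ μ.getD i 0 := by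
  rcases lt_or_ge i μ.length with h | h
  · rw [List.getD_eq_getElem _ _ h]; exact hμd _ (List.getElem_mem _)
  · rw [List.getD_eq_default _ _ h]; exact dvd_zero s

lemma rho_getD (hρ1 : ∀ x ∈ ρ, 1 ≤ x ∧ x ≤ s - 1) (hj : j < ρ.length) :
    1 ≤ ρ.getD j 0 ∧ ρ.getD j 0 ≤ s - 1 := by
  rw [List.getD_eq_getElem _ _ hj]; exact hρ1 _ (List.getElem_mem _)

lemma mu_getD_pos (hμp : ∀ x ∈ μ, 0 < x) (h : i < μ.length) : 0 < μ.getD i 0 := by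
  rw [List.getD_eq_getElem _ _ h]; exact hμp _ (List.getElem_mem _)

lemma Ac_pos (hγs : γ.Pairwise (· < ·)) (hm : 1 ≤ γ.length) (hmem : t ∉ γ)
    (hlast : t < γ.getD (γ.length - 1) 0) : 0 < Ac ρ γ t := by
  set S := (Finset.range γ.length).filter (fun j => t < γ.getD j 0) with hS
  have hne : S.Nonempty := ⟨γ.length - 1, by
    rw [hS, Finset.mem_filter, Finset.mem_range]; exact ⟨by omega, hlast⟩⟩
  set j0 := S.min' hne with hj0
  have hj0S : j0 ∈ S := Finset.min'_mem _ _
  rw [hS, Finset.mem_filter, Finset.mem_range] at hj0S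
  have hd : dseq ρ γ j0 = 1 := by
    rcases Nat.eq_zero_or_pos j0 with h0 | h0
    · rw [h0]; exact dseq_zero
    · have hnotS : j0 - 1 ∉ S := by
        intro hc
        have := Finset.min'_le S _ hc
        omega
      rw [hS, Finset.mem_filter, Finset.mem_range] at hnotS
      push_neg at hnotS
      have hle : γ.getD (j0 - 1) 0 ≤ t := hnotS (by omega)
      have hne2 : γ.getD (j0 - 1) 0 ≠ t := by
        intro hc; exact hmem (gam_mem_iff.2 ⟨j0 - 1, by omega, hc⟩)
      rw [dseq_eq_one_iff]
      rintro ⟨-, -, hadj⟩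
      omega
  apply Finset.card_pos.2
  exact ⟨j0, Finset.mem_filter.2 ⟨Finset.mem_range.2 hj0S.1, hd, hj0S.2⟩⟩

lemma gv_anti (hγs : γ.Pairwise (· < ·)) (hlen : γ.length = ρ.length)
    (hρ1 : ∀ x ∈ ρ, 1 ≤ x ∧ x ≤ s - 1) (hs2 : 2 ≤ s) (hμs : μ.Pairwise (· ≥ ·))
    (i : ℕ) : gv s ρ γ μ (i + 1) ≤ gv s ρ γ μ i := by
  have hmu : μ.getD (i + 1) 0 ≤ μ.getD i 0 := getD_anti hμs (by omega)
  have hA := Ac_succ (ρ := ρ) (γ := γ) (t := i + 1) hγs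
  rw [show i + 1 + 1 = i + 2 from rfl] at hA
  unfold gv
  rw [show i + 1 + 1 = i + 2 from rfl]
  by_cases hmem : (i + 2) ∈ γ
  · obtain ⟨j, hj, hgj⟩ := gam_mem_iff.1 hmem
    have hrt2 : rt ρ γ (i + 2) = ρ.getD j 0 := by rw [← hgj]; exact rt_of_mem hγs hj
    rcases dseq_cases (ρ := ρ) (γ := γ) (j := j) with hd | hd
    · obtain ⟨hj0, hrle, hadj⟩ := dseq_eq_zero_iff.1 hd
      have hAeq : Ac ρ γ (i + 1) = Ac ρ γ (i + 2) := by
        rw [hA, if_neg, add_zero]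
        rintro ⟨j', hj', hgj', hd'⟩
        have : j' = j := gam_inj hγs hj' hj (by omega)
        rw [this] at hd'; omega
      have hg1 : γ.getD (j - 1) 0 = i + 1 := by omega
      have hrt1 : rt ρ γ (i + 1) = ρ.getD (j - 1) 0 := by
        rw [← hg1]; exact rt_of_mem hγs (by omega)
      rw [hrt1, hrt2, hAeq]
      omega
    · have hAeq : Ac ρ γ (i + 1) = Ac ρ γ (i + 2) + 1 := by
        rw [hA, if_pos ⟨j, hj, hgj, hd⟩]
      have hrb := rho_getD hρ1 (by omega : j < ρ.length)
      rw [hrt2, hAeq, Nat.mul_add, Nat.mul_one]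
      omega
  · rw [rt_of_not_mem hlen hmem]
    have hAle : Ac ρ γ (i + 2) ≤ Ac ρ γ (i + 1) := Ac_anti (by omega)
    have := Nat.mul_le_mul_left s hAle
    omega

lemma gv_zero (hγs : γ.Pairwise (· < ·)) (hlen : γ.length = ρ.length)
    (h : Lg γ μ ≤ i) : gv s ρ γ μ i = 0 := by
  unfold gv
  have h1 : γ.getD (γ.length - 1) 0 ≤ i := le_trans (le_max_left _ _) h
  have h2 : μ.length ≤ i := le_trans (le_max_right _ _) h
  have h3 : i + 1 ∉ γ := by
    intro hc
    have := gam_mem_le_last hγs hc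
    omega
  rw [List.getD_eq_default _ _ h2, Ac_le_of_gam_le hγs (by omega), rt_of_not_mem hlen h3]
  simp

lemma gv_pos (hγs : γ.Pairwise (· < ·)) (hγp : ∀ x ∈ γ, 0 < x)
    (hlen : γ.length = ρ.length) (hρ1 : ∀ x ∈ ρ, 1 ≤ x ∧ x ≤ s - 1) (hs2 : 2 ≤ s)
    (hμp : ∀ x ∈ μ, 0 < x) (hm : 1 ≤ γ.length)
    (h : i < Lg γ μ) : 0 < gv s ρ γ μ i := by
  unfold gv
  by_cases hmem : (i + 1) ∈ γ
  · have := rt_pos hρ1 hlen hmem; omega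
  · rcases lt_or_ge i μ.length with h2 | h2
    · have := mu_getD_pos hμp h2; omega
    · have hlast : i + 1 < γ.getD (γ.length - 1) 0 := by
        have h3 : i < γ.getD (γ.length - 1) 0 := by
          unfold Lg at h; omega
        rcases eq_or_lt_of_le (show i + 1 ≤ γ.getD (γ.length - 1) 0 by omega) with he | hlt
        · exact absurd (gam_mem_iff.2 ⟨γ.length - 1, by omega, he.symm⟩) hmem
        · exact hlt
      have hApos : 0 < Ac ρ γ (i + 1) := Ac_pos hγs hm hmem hlast
      have : 0 < s * Ac ρ γ (i + 1) := Nat.mul_pos (by omega) hApos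
      omega

lemma gv_mod (hlen : γ.length = ρ.length) (hρ1 : ∀ x ∈ ρ, 1 ≤ x ∧ x ≤ s - 1)
    (hs2 : 2 ≤ s) (hμd : ∀ x ∈ μ, s ∣ x) (i : ℕ) :
    gv s ρ γ μ i % s = rt ρ γ (i + 1) := by
  unfold gv
  obtain ⟨k, hk⟩ := sdvd_getD hμd (μ := μ) i
  have h1 : rt ρ γ (i + 1) < s := rt_lt (by omega) hρ1 hlen
  rw [hk, show s * k + s * Ac ρ γ (i + 1) + rt ρ γ (i + 1)
      = s * (k + Ac ρ γ (i + 1)) + rt ρ γ (i + 1) by ring,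
    Nat.mul_add_mod, Nat.mod_eq_of_lt h1]

lemma gv_div (hlen : γ.length = ρ.length) (hρ1 : ∀ x ∈ ρ, 1 ≤ x ∧ x ≤ s - 1)
    (hs2 : 2 ≤ s) (hμd : ∀ x ∈ μ, s ∣ x) (i : ℕ) :
    gv s ρ γ μ i / s = μ.getD i 0 / s + Ac ρ γ (i + 1) := by
  unfold gv
  obtain ⟨k, hk⟩ := sdvd_getD hμd (μ := μ) i
  have h1 : rt ρ γ (i + 1) < s := rt_lt (by omega) hρ1 hlen
  rw [hk, show s * k + s * Ac ρ γ (i + 1) + rt ρ γ (i + 1)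
      = s * (k + Ac ρ γ (i + 1)) + rt ρ γ (i + 1) by ring,
    Nat.mul_add_div (by omega), Nat.div_eq_of_lt h1, add_zero,
    Nat.mul_div_cancel_left _ (by omega : 0 < s)]

lemma gmap_length : (gmap s ρ γ μ).length = Lg γ μ := by simp [gmap]

lemma gmap_getD (hγs : γ.Pairwise (· < ·)) (hlen : γ.length = ρ.length) (i : ℕ) :
    (gmap s ρ γ μ).getD i 0 = gv s ρ γ μ i := by
  rcases lt_or_ge i (Lg γ μ) with h | h
  · rw [List.getD_eq_getElem _ _ (by simp [gmap_length]; omega)]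
    simp [gmap]
  · rw [List.getD_eq_default _ _ (by rw [gmap_length]; omega), gv_zero hγs hlen h]

end gvlem
section gmaplem
variable {s : ℕ} {ρ γ μ : List ℕ} {i t j : ℕ}

lemma gam_indexOf (hγs : γ.Pairwise (· < ·)) (hj : j < γ.length) :
    γ.idxOf (γ.getD j 0) = j := by
  rw [List.getD_eq_getElem _ _ hj, (gam_nodup hγs).idxOf_getElem]

lemma Lg_pos (hγp : ∀ x ∈ γ, 0 < x) (hm : 1 ≤ γ.length) : 1 ≤ Lg γ μ := by
  have := gam_pos (γ := γ) hγp (j := γ.length - 1) (by omega)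
  have h2 : γ.getD (γ.length - 1) 0 ≤ Lg γ μ := le_max_left _ _
  omega

lemma gmap_partition (hγs : γ.Pairwise (· < ·)) (hγp : ∀ x ∈ γ, 0 < x)
    (hlen : γ.length = ρ.length) (hρ1 : ∀ x ∈ ρ, 1 ≤ x ∧ x ≤ s - 1) (hs2 : 2 ≤ s)
    (hμs : μ.Pairwise (· ≥ ·)) (hμp : ∀ x ∈ μ, 0 < x) (hm : 1 ≤ γ.length) :
    IsPartition (gmap s ρ γ μ) := by
  constructor
  · rw [List.pairwise_iff_getElem]
    intro a b ha hb hab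
    unfold gmap at ha hb ⊢
    simp only [List.getElem_map, List.getElem_range, List.length_map, List.length_range] at *
    exact antitone_nat_of_succ_le (gv_anti hγs hlen hρ1 hs2 hμs) (le_of_lt hab)
  · intro x hx
    unfold gmap at hx
    rw [List.mem_map] at hx
    obtain ⟨i, hi, rfl⟩ := hx
    rw [List.mem_range] at hi
    exact gv_pos hγs hγp hlen hρ1 hs2 hμp hm hi

lemma sumA (hγs : γ.Pairwise (· < ·)) (hγp : ∀ x ∈ γ, 0 < x) {L : ℕ}
    (hL : γ.getD (γ.length - 1) 0 ≤ L) :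
    ∑ i ∈ Finset.range L, Ac ρ γ (i + 1)
      = ∑ j ∈ Finset.range γ.length, dseq ρ γ j * (γ.getD j 0 - 1) := by
  unfold Ac
  rw [Finset.sum_congr rfl fun i _ => Finset.card_filter _ _, Finset.sum_comm]
  apply Finset.sum_congr rfl
  intro j hj
  rw [Finset.mem_range] at hj
  rcases dseq_cases (ρ := ρ) (γ := γ) (j := j) with hd | hd
  · simp [hd]
  · have hgle : γ.getD j 0 ≤ L := le_trans (gam_le_last hγs hj) hL
    have hgpos := gam_pos hγp hj
    simp only [hd, true_and, one_mul]
    rw [← Finset.card_filter]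
    rw [show (Finset.range L).filter (fun i => i + 1 < γ.getD j 0)
        = Finset.range (γ.getD j 0 - 1) from ?_]
    · rw [Finset.card_range]
    · ext a
      simp only [Finset.mem_filter, Finset.mem_range]
      omega

lemma rt_eq_sum (hγs : γ.Pairwise (· < ·)) (hlen : γ.length = ρ.length) (i : ℕ) :
    rt ρ γ (i + 1) = ∑ j ∈ Finset.range γ.length,
      if γ.getD j 0 = i + 1 then ρ.getD j 0 else 0 := by
  by_cases hmem : i + 1 ∈ γ
  · obtain ⟨j0, hj0, hg⟩ := gam_mem_iff.1 hmem
    rw [Finset.sum_eq_single_of_mem j0 (Finset.mem_range.2 hj0)]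
    · rw [if_pos hg, ← hg, rt_of_mem hγs hj0]
    · intro j hj hne
      rw [Finset.mem_range] at hj
      rw [if_neg]
      intro hc
      exact hne (gam_inj hγs hj hj0 (by omega))
  · rw [rt_of_not_mem hlen hmem, Finset.sum_eq_zero]
    intro j hj
    rw [Finset.mem_range] at hj
    rw [if_neg]
    intro hc
    exact hmem (gam_mem_iff.2 ⟨j, hj, hc⟩)

lemma sumRt (hγs : γ.Pairwise (· < ·)) (hγp : ∀ x ∈ γ, 0 < x)
    (hlen : γ.length = ρ.length) {L : ℕ} (hL : γ.getD (γ.length - 1) 0 ≤ L) :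
    ∑ i ∈ Finset.range L, rt ρ γ (i + 1) = ρ.sum := by
  rw [Finset.sum_congr rfl fun i _ => rt_eq_sum hγs hlen i, Finset.sum_comm]
  have hstep : ∀ j ∈ Finset.range γ.length,
      (∑ i ∈ Finset.range L, if γ.getD j 0 = i + 1 then ρ.getD j 0 else 0) = ρ.getD j 0 := by
    intro j hj
    rw [Finset.mem_range] at hj
    have hgpos := gam_pos hγp hj
    have hgle : γ.getD j 0 ≤ L := le_trans (gam_le_last hγs hj) hL
    rw [Finset.sum_eq_single_of_mem (γ.getD j 0 - 1) (Finset.mem_range.2 (by omega))]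
    · rw [if_pos (by omega)]
    · intro i hi hne
      rw [if_neg]
      omega
  rw [Finset.sum_congr rfl hstep, hlen]
  exact sum_range_getD ρ le_rfl

lemma gmap_sum (hγs : γ.Pairwise (· < ·)) (hγp : ∀ x ∈ γ, 0 < x)
    (hlen : γ.length = ρ.length) :
    (gmap s ρ γ μ).sum = μ.sum + ρ.sum
      + s * ∑ j ∈ Finset.range γ.length, dseq ρ γ j * (γ.getD j 0 - 1) := by
  unfold gmap gv
  rw [sum_list_range]
  have hL1 : γ.getD (γ.length - 1) 0 ≤ Lg γ μ := le_max_left _ _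
  have hL2 : μ.length ≤ Lg γ μ := le_max_right _ _
  rw [Finset.sum_add_distrib, Finset.sum_add_distrib, ← Finset.mul_sum,
    sum_range_getD μ hL2, sumA hγs hγp hL1, sumRt hγs hγp hlen hL1]
  ring

lemma gmap_filter_eq (hγs : γ.Pairwise (· < ·)) (hγp : ∀ x ∈ γ, 0 < x)
    (hlen : γ.length = ρ.length) (hρ1 : ∀ x ∈ ρ, 1 ≤ x ∧ x ≤ s - 1) :
    (List.range (Lg γ μ)).filter (fun i => decide (rt ρ γ (i + 1) ≠ 0))
      = γ.map (fun t => t - 1) := by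
  haveI : Std.Antisymm (α := ℕ) (· < ·) := ⟨fun a b h1 h2 => absurd h2 (lt_asymm h1)⟩
  refine (fun h1 h2 h3 => List.Perm.eq_of_pairwise' (r := (· < ·)) h2 h3 h1) ?_ ?_ ?_
  · rw [List.perm_ext_iff_of_nodup (List.Nodup.filter _ List.nodup_range)]
    · intro a
      rw [List.mem_filter, List.mem_map, List.mem_range]
      simp only [decide_eq_true_eq]
      constructor
      · rintro ⟨ha, hrt⟩
        have hmem : a + 1 ∈ γ := (rt_pos_iff hρ1 hlen).1 (by omega)
        exact ⟨a + 1, hmem, by omega⟩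
      · rintro ⟨t, ht, rfl⟩
        have hpos : 0 < t := hγp t ht
        rw [show t - 1 + 1 = t by omega]
        have h2 := gam_mem_le_last hγs ht
        have h3 := rt_pos hρ1 hlen ht
        have h4 : γ.getD (γ.length - 1) 0 ≤ Lg γ μ := le_max_left _ _
        exact ⟨by omega, by omega⟩
    · apply List.Nodup.map_on ?_ (gam_nodup hγs)
      intro x hx y hy hxy
      have := hγp x hx; have := hγp y hy; omega
  · exact List.Pairwise.filter _ (List.pairwise_lt_range)
  · refine List.pairwise_iff_getElem.mpr ?_
    intro a b ha hb hab
    simp only [List.length_map] at ha hb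
    simp only [List.getElem_map]
    have h1 := List.pairwise_iff_getElem.1 hγs a b ha hb hab
    have h2 := hγp _ (List.getElem_mem ha)
    omega

lemma gmap_partRem (hγs : γ.Pairwise (· < ·)) (hγp : ∀ x ∈ γ, 0 < x)
    (hlen : γ.length = ρ.length) (hρ1 : ∀ x ∈ ρ, 1 ≤ x ∧ x ≤ s - 1) (hs2 : 2 ≤ s)
    (hμd : ∀ x ∈ μ, s ∣ x) :
    partRem s (gmap s ρ γ μ) = ρ := by
  unfold partRem gmap
  rw [List.map_map]
  rw [show (List.range (Lg γ μ)).map ((fun x => x % s) ∘ gv s ρ γ μ)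
      = (List.range (Lg γ μ)).map (fun i => rt ρ γ (i + 1)) from
    List.map_congr_left fun i _ => gv_mod hlen hρ1 hs2 hμd i]
  rw [List.filter_map]
  rw [show ((fun x => decide (x ≠ 0)) ∘ fun i => rt ρ γ (i + 1))
      = (fun i => decide (rt ρ γ (i + 1) ≠ 0)) from rfl]
  rw [gmap_filter_eq hγs hγp hlen hρ1, List.map_map]
  apply List.ext_getElem
  · simp [hlen]
  · intro n h1 h2
    simp only [List.getElem_map, Function.comp]
    have hn : n < γ.length := by simpa using h1
    have hpos : 0 < γ[n] := hγp _ (List.getElem_mem hn)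
    rw [show γ[n] - 1 + 1 = γ[n] by omega, show γ[n] = γ.getD n 0 from
      (List.getD_eq_getElem _ _ hn).symm, rt_of_mem hγs hn,
      List.getD_eq_getElem _ _ (by omega)]

lemma gmap_partRs (hγs : γ.Pairwise (· < ·)) (hγp : ∀ x ∈ γ, 0 < x)
    (hlen : γ.length = ρ.length) (hρ1 : ∀ x ∈ ρ, 1 ≤ x ∧ x ≤ s - 1) (hs2 : 2 ≤ s)
    (hμd : ∀ x ∈ μ, s ∣ x) :
    partRs s (gmap s ρ γ μ) = Lg γ μ - γ.length := by
  have hrem := gmap_partRem (μ := μ) hγs hγp hlen hρ1 hs2 hμd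
  have hlen2 : (partRem s (gmap s ρ γ μ)).length = ρ.length := by rw [hrem]
  unfold partRem at hlen2
  rw [← List.countP_eq_length_filter, List.countP_map] at hlen2
  have hsplit := List.length_eq_countP_add_countP (fun x => decide (x % s = 0)) (l := gmap s ρ γ μ)
  have hco : List.countP (fun a => decide ¬(decide (a % s = 0) = true)) (gmap s ρ γ μ)
      = List.countP ((fun x => decide (x ≠ 0)) ∘ fun x => x % s) (gmap s ρ γ μ) := by
    apply List.countP_congr
    intro a _
    simp
  rw [hco, hlen2, gmap_length] at hsplit
  unfold partRs
  omega

end gmaplem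
section partCslem
variable {s : ℕ} {ρ γ μ : List ℕ} {i t j : ℕ}

lemma headD_eq_getD (l : List ℕ) : l.headD 0 = l.getD 0 0 := by cases l <;> rfl

lemma gmap_DC (hγs : γ.Pairwise (· < ·)) (hγp : ∀ x ∈ γ, 0 < x)
    (hlen : γ.length = ρ.length) (hρ1 : ∀ x ∈ ρ, 1 ≤ x ∧ x ≤ s - 1) (hs2 : 2 ≤ s)
    (hμd : ∀ x ∈ μ, s ∣ x) :
    ((Finset.range (Lg γ μ)).filter
      (fun i => (gmap s ρ γ μ).getD i 0 % s < (gmap s ρ γ μ).getD (i + 1) 0 % s)).card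
      = Ac ρ γ 1 := by
  have hmodD : ∀ t, (gmap s ρ γ μ).getD t 0 % s = rt ρ γ (t + 1) := fun t => by
    rw [gmap_getD hγs hlen, gv_mod hlen hρ1 hs2 hμd]
  rw [Finset.filter_congr (q := fun i => rt ρ γ (i + 1) < rt ρ γ (i + 2))
    (fun i _ => by rw [hmodD, hmodD])]
  unfold Ac
  apply Finset.card_nbij' (i := fun i => γ.idxOf (i + 2)) (j := fun j => γ.getD j 0 - 2)
  · intro a ha
    simp only [Finset.mem_coe, Finset.mem_filter, Finset.mem_range] at ha ⊢
    obtain ⟨haL, hlt⟩ := ha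
    have hmem2 : a + 2 ∈ γ := by
      apply (rt_pos_iff hρ1 hlen).1
      omega
    obtain ⟨j0, hj0, hg⟩ := gam_mem_iff.1 hmem2
    have hidx : γ.idxOf (a + 2) = j0 := by rw [← hg, gam_indexOf hγs hj0]
    rw [hidx]
    refine ⟨hj0, ?_, by omega⟩
    rcases dseq_cases (ρ := ρ) (γ := γ) (j := j0) with hd | hd
    · exfalso
      obtain ⟨hj0pos, hrle, hadj⟩ := dseq_eq_zero_iff.1 hd
      have hg1 : γ.getD (j0 - 1) 0 = a + 1 := by omega
      have hrt1 : rt ρ γ (a + 1) = ρ.getD (j0 - 1) 0 := by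
        rw [← hg1]; exact rt_of_mem hγs (by omega)
      have hrt2 : rt ρ γ (a + 2) = ρ.getD j0 0 := by
        rw [← hg]; exact rt_of_mem hγs hj0
      omega
    · exact hd
  · intro j hj
    simp only [Finset.mem_coe, Finset.mem_filter, Finset.mem_range] at hj ⊢
    obtain ⟨hjlen, hd, hg2⟩ := hj
    have hgle : γ.getD j 0 ≤ Lg γ μ := le_trans (gam_le_last hγs hjlen) (le_max_left _ _)
    refine ⟨by omega, ?_⟩
    rw [show γ.getD j 0 - 2 + 2 = γ.getD j 0 by omega]
    have hrt2 : rt ρ γ (γ.getD j 0) = ρ.getD j 0 := rt_of_mem hγs hjlen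
    have hρj := rho_getD hρ1 (by omega : j < ρ.length)
    by_cases hmem1 : γ.getD j 0 - 2 + 1 ∈ γ
    · obtain ⟨j', hj', hg'⟩ := gam_mem_iff.1 hmem1
      have hadj : j' + 1 = j := gam_adj hγs hj' hjlen (by omega)
      have hrt1 : rt ρ γ (γ.getD j 0 - 2 + 1) = ρ.getD j' 0 := by
        rw [← hg']; exact rt_of_mem hγs hj'
      have hnd := dseq_eq_one_iff.1 hd
      have he1 : ρ.getD (j - 1) 0 = ρ.getD j' 0 := by rw [show j - 1 = j' by omega]
      have he2 : γ.getD (j - 1) 0 = γ.getD j' 0 := by rw [show j - 1 = j' by omega]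
      rw [hrt1, hrt2]
      omega
    · have hrt1 : rt ρ γ (γ.getD j 0 - 2 + 1) = 0 := rt_of_not_mem hlen hmem1
      omega
  · intro a ha
    simp only [Finset.mem_coe, Finset.mem_filter, Finset.mem_range] at ha
    obtain ⟨haL, hlt⟩ := ha
    have hmem2 : a + 2 ∈ γ := by
      apply (rt_pos_iff hρ1 hlen).1
      omega
    obtain ⟨j0, hj0, hg⟩ := gam_mem_iff.1 hmem2
    have hidx : γ.idxOf (a + 2) = j0 := by rw [← hg, gam_indexOf hγs hj0]
    simp only [hidx]
    omega
  · intro j hj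
    simp only [Finset.mem_coe, Finset.mem_filter, Finset.mem_range] at hj
    obtain ⟨hjlen, hd, hg2⟩ := hj
    simp only [show γ.getD j 0 - 2 + 2 = γ.getD j 0 by omega]
    exact gam_indexOf hγs hjlen

lemma gmap_partCs (hγs : γ.Pairwise (· < ·)) (hγp : ∀ x ∈ γ, 0 < x)
    (hlen : γ.length = ρ.length) (hρ1 : ∀ x ∈ ρ, 1 ≤ x ∧ x ≤ s - 1) (hs2 : 2 ≤ s)
    (hμs : μ.Pairwise (· ≥ ·)) (hμp : ∀ x ∈ μ, 0 < x) (hμd : ∀ x ∈ μ, s ∣ x)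
    (hm : 1 ≤ γ.length) :
    partCs s (gmap s ρ γ μ) = μ.headD 0 / s := by
  have hsort := (gmap_partition hγs hγp hlen hρ1 hs2 hμs hμp hm).1
  have h := partCs_eq s (by omega) _ hsort
  rw [gmap_length, gmap_DC hγs hγp hlen hρ1 hs2 hμd,
    gmap_getD hγs hlen 0, gv_div hlen hρ1 hs2 hμd 0] at h
  simp only [Nat.zero_add] at h
  rw [headD_eq_getD]
  omega

end partCslem
section injlem
variable {s : ℕ} {ρ γ γ' μ μ' : List ℕ}

lemma mu_eq_of_getD (hμp : ∀ x ∈ μ, 0 < x) (hμp' : ∀ x ∈ μ', 0 < x)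
    (h : ∀ i, μ.getD i 0 = μ'.getD i 0) : μ = μ' := by
  have hlen : μ.length = μ'.length := by
    by_contra hne
    rcases Nat.lt_or_ge μ.length μ'.length with hlt | hge
    · have h1 := h μ.length
      rw [List.getD_eq_default _ _ le_rfl] at h1
      have := mu_getD_pos hμp' hlt
      omega
    · have hlt : μ'.length < μ.length := by omega
      have h1 := h μ'.length
      rw [List.getD_eq_default μ' _ le_rfl] at h1
      have := mu_getD_pos hμp hlt
      omega
  apply List.ext_getElem hlen
  intro n h1 h2
  have h3 := h n
  rwa [List.getD_eq_getElem _ _ h1, List.getD_eq_getElem _ _ h2] at h3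

lemma gmap_inj (hγs : γ.Pairwise (· < ·)) (hγp : ∀ x ∈ γ, 0 < x)
    (hlen : γ.length = ρ.length) (hρ1 : ∀ x ∈ ρ, 1 ≤ x ∧ x ≤ s - 1) (hs2 : 2 ≤ s)
    (hμp : ∀ x ∈ μ, 0 < x) (hμd : ∀ x ∈ μ, s ∣ x)
    (hγs' : γ'.Pairwise (· < ·)) (hγp' : ∀ x ∈ γ', 0 < x)
    (hlen' : γ'.length = ρ.length) (hμp' : ∀ x ∈ μ', 0 < x) (hμd' : ∀ x ∈ μ', s ∣ x)
    (heq : gmap s ρ γ μ = gmap s ρ γ' μ') : γ = γ' ∧ μ = μ' := by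
  have hrteq : ∀ i, rt ρ γ (i + 1) = rt ρ γ' (i + 1) := fun i => by
    rw [← gv_mod hlen hρ1 hs2 hμd i, ← gv_mod hlen' hρ1 hs2 hμd' i,
      ← gmap_getD hγs hlen i, ← gmap_getD hγs' hlen' i, heq]
  have hmemiff : ∀ a, a ∈ γ ↔ a ∈ γ' := by
    intro a
    by_cases hapos : 0 < a
    · rw [← rt_pos_iff hρ1 hlen (t := a), ← rt_pos_iff hρ1 hlen' (t := a)]
      have h2 := hrteq (a - 1)
      rw [show a - 1 + 1 = a by omega] at h2
      rw [h2]
    · constructor <;> intro hc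
      · exact absurd (hγp _ hc) (by omega)
      · exact absurd (hγp' _ hc) (by omega)
  have hγeq : γ = γ' := by
    haveI : Std.Antisymm (α := ℕ) (· < ·) := ⟨fun a b h1 h2 => absurd h2 (lt_asymm h1)⟩
    exact List.Perm.eq_of_pairwise' hγs hγs'
      ((List.perm_ext_iff_of_nodup (gam_nodup hγs) (gam_nodup hγs')).2 hmemiff)
  subst hγeq
  refine ⟨rfl, mu_eq_of_getD hμp hμp' fun i => ?_⟩
  have h1 : gv s ρ γ μ i = gv s ρ γ μ' i := by
    rw [← gmap_getD hγs hlen i, ← gmap_getD (μ := μ') hγs hlen i, heq]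
  unfold gv at h1
  omega

end injlem
section reconA
variable {s : ℕ} {ρ l : List ℕ} {t j i : ℕ}

def gamOf (s : ℕ) (l : List ℕ) : List ℕ :=
  ((List.range l.length).filter (fun i => decide (l.getD i 0 % s ≠ 0))).map (· + 1)

lemma list_eq_range_map (l : List ℕ) :
    l = (List.range l.length).map (fun i => l.getD i 0) := by
  apply List.ext_getElem (by simp)
  intro n h1 h2
  rw [List.getElem_map, List.getElem_range, List.getD_eq_getElem _ _ h1]

lemma gamOf_sorted : (gamOf s l).Pairwise (· < ·) := by
  unfold gamOf
  have hp : List.Pairwise (· < ·)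
      ((List.range l.length).filter (fun i => decide (l.getD i 0 % s ≠ 0))) :=
    List.Pairwise.filter _ (List.pairwise_lt_range)
  exact hp.map _ (fun _ _ h => by omega)

lemma gamOf_pos : ∀ x ∈ gamOf s l, 0 < x := by
  intro x hx
  unfold gamOf at hx
  rw [List.mem_map] at hx
  obtain ⟨i, -, rfl⟩ := hx
  omega

lemma gamOf_mem : t ∈ gamOf s l ↔ 1 ≤ t ∧ t ≤ l.length ∧ l.getD (t - 1) 0 % s ≠ 0 := by
  unfold gamOf
  rw [List.mem_map]
  constructor
  · rintro ⟨i, hi, rfl⟩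
    rw [List.mem_filter, List.mem_range] at hi
    simp only [decide_eq_true_eq] at hi
    refine ⟨by omega, by omega, ?_⟩
    rw [show i + 1 - 1 = i by omega]
    exact hi.2
  · rintro ⟨h1, h2, h3⟩
    refine ⟨t - 1, ?_, by omega⟩
    rw [List.mem_filter, List.mem_range]
    simp only [decide_eq_true_eq]
    exact ⟨by omega, h3⟩

lemma partRem_eq : partRem s l = (gamOf s l).map (fun t => l.getD (t - 1) 0 % s) := by
  unfold partRem gamOf
  conv_lhs => rw [list_eq_range_map l]
  rw [List.map_map, List.filter_map, List.map_map]
  apply List.map_congr_left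
  intro i hi
  simp only [Function.comp]
  rw [show i + 1 - 1 = i by omega]

lemma gamOf_len (hrem : partRem s l = ρ) : (gamOf s l).length = ρ.length := by
  rw [← hrem, partRem_eq, List.length_map]

lemma gamOf_rho (hrem : partRem s l = ρ) (hj : j < (gamOf s l).length) :
    ρ.getD j 0 = l.getD ((gamOf s l).getD j 0 - 1) 0 % s := by
  have h1 : ρ = (gamOf s l).map (fun t => l.getD (t - 1) 0 % s) := by
    rw [← hrem, partRem_eq]
  have hj2 : j < ρ.length := by rw [h1, List.length_map]; exact hj
  rw [List.getD_eq_getElem _ _ hj2, List.getD_eq_getElem _ _ hj,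
    List.getElem_of_eq h1, List.getElem_map]

lemma rt_getD_lt (hrem : partRem s l = ρ) (hi : i < l.length) :
    rt ρ (gamOf s l) (i + 1) = l.getD i 0 % s := by
  by_cases h : l.getD i 0 % s = 0
  · rw [h, rt_of_not_mem (gamOf_len hrem)]
    rw [gamOf_mem]
    rw [show i + 1 - 1 = i by omega]
    omega
  · have hmem : i + 1 ∈ gamOf s l := by
      rw [gamOf_mem, show i + 1 - 1 = i by omega]
      exact ⟨by omega, by omega, h⟩
    obtain ⟨j, hj, hg⟩ := gam_mem_iff.1 hmem
    rw [← hg, rt_of_mem gamOf_sorted hj, gamOf_rho hrem hj, hg,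
      show i + 1 - 1 = i by omega]

lemma gamOf_last_le : (gamOf s l).getD ((gamOf s l).length - 1) 0 ≤ l.length := by
  rcases Nat.eq_zero_or_pos (gamOf s l).length with h | h
  · rw [List.getD_eq_default _ _ (by omega)]; omega
  · have hmem : (gamOf s l).getD ((gamOf s l).length - 1) 0 ∈ gamOf s l :=
      gam_mem_iff.2 ⟨_, by omega, rfl⟩
    exact (gamOf_mem.1 hmem).2.1

lemma Ac_zero_ge (hle : l.length ≤ t) : Ac ρ (gamOf s l) t = 0 := by
  apply Ac_le_of_gam_le gamOf_sorted
  exact le_trans gamOf_last_le hle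

lemma rt_zero_ge (hrem : partRem s l = ρ) (hle : l.length ≤ t) : rt ρ (gamOf s l) (t + 1) = 0 := by
  apply rt_of_not_mem (gamOf_len hrem)
  rw [gamOf_mem]
  omega

end reconA
section reconB
variable {s : ℕ} {ρ l : List ℕ} {t j i : ℕ}

lemma e_one_lt (hl : IsPartition l) (hrem : partRem s l = ρ)
    (hρ1 : ∀ x ∈ ρ, 1 ≤ x ∧ x ≤ s - 1) (hs2 : 2 ≤ s)
    {i j : ℕ} (hj : j < (gamOf s l).length)
    (hg : (gamOf s l).getD j 0 = i + 2) (hd : dseq ρ (gamOf s l) j = 1) :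
    l.getD i 0 % s < l.getD (i + 1) 0 % s := by
  have hlen := gamOf_len (s := s) (l := l) hrem
  have hmem : (gamOf s l).getD j 0 ∈ gamOf s l := gam_mem_iff.2 ⟨j, hj, rfl⟩
  have hi2 : i + 2 ≤ l.length := by
    have := (gamOf_mem.1 hmem).2.1
    omega
  have hu' : l.getD (i + 1) 0 % s = ρ.getD j 0 := by
    rw [gamOf_rho hrem hj, hg, show i + 2 - 1 = i + 1 by omega]
  have hρj := rho_getD hρ1 (show j < ρ.length by omega)
  by_cases hmem1 : i + 1 ∈ gamOf s l
  · obtain ⟨j', hj', hg'⟩ := gam_mem_iff.1 hmem1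
    have hadj : j' + 1 = j := gam_adj gamOf_sorted hj' hj (by omega)
    have hu : l.getD i 0 % s = ρ.getD j' 0 := by
      rw [gamOf_rho hrem hj', hg', show i + 1 - 1 = i by omega]
    have hnd := dseq_eq_one_iff.1 hd
    have he1 : ρ.getD (j - 1) 0 = ρ.getD j' 0 := by rw [show j - 1 = j' by omega]
    have he2 : (gamOf s l).getD (j - 1) 0 = (gamOf s l).getD j' 0 := by
      rw [show j - 1 = j' by omega]
    omega
  · have h0 : l.getD i 0 % s = 0 := by
      by_contra hc
      exact hmem1 (gamOf_mem.2 ⟨by omega, by omega, by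
        rw [show i + 1 - 1 = i by omega]; exact hc⟩)
    omega

lemma key_ineq (hl : IsPartition l) (hrem : partRem s l = ρ)
    (hρ1 : ∀ x ∈ ρ, 1 ≤ x ∧ x ≤ s - 1) (hs2 : 2 ≤ s) :
    ∀ i, rt ρ (gamOf s l) (i + 1) + s * Ac ρ (gamOf s l) (i + 1) ≤ l.getD i 0 := by
  suffices h : ∀ k i, l.length ≤ i + k →
      rt ρ (gamOf s l) (i + 1) + s * Ac ρ (gamOf s l) (i + 1) ≤ l.getD i 0 by
    intro i; exact h l.length i (by omega)
  intro k
  induction k with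
  | zero =>
    intro i hik
    rw [rt_zero_ge hrem (by omega), Ac_zero_ge (by omega)]
    simp
  | succ k ih =>
    intro i hik
    rcases le_or_gt l.length (i + k) with hik' | hik'
    · exact ih i hik'
    · have hiL : i < l.length := by omega
      have hIH := ih (i + 1) (by omega)
      simp only [show i + 1 + 1 = i + 2 from rfl] at hIH
      have hmono : l.getD (i + 1) 0 ≤ l.getD i 0 := getD_anti hl.1 (by omega)
      have hrti : rt ρ (gamOf s l) (i + 1) = l.getD i 0 % s := rt_getD_lt hrem hiL
      have hA := Ac_succ (ρ := ρ) (γ := gamOf s l) (t := i + 1) gamOf_sorted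
      rw [show i + 1 + 1 = i + 2 from rfl] at hA
      have hdm := Nat.div_add_mod (l.getD i 0) s
      have hs0 : 0 < s := by omega
      have hsA2 : s * Ac ρ (gamOf s l) (i + 2) ≤ l.getD (i + 1) 0 := by omega
      by_cases he : ∃ j, j < (gamOf s l).length ∧ (gamOf s l).getD j 0 = i + 2 ∧
          dseq ρ (gamOf s l) j = 1
      · obtain ⟨j, hj, hg, hd⟩ := he
        have hAe : Ac ρ (gamOf s l) (i + 1) = Ac ρ (gamOf s l) (i + 2) + 1 := by
          rw [hA, if_pos ⟨j, hj, hg, hd⟩]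
        have hul : l.getD i 0 % s < l.getD (i + 1) 0 % s := e_one_lt hl hrem hρ1 hs2 hj hg hd
        have hdm' := Nat.div_add_mod (l.getD (i + 1) 0) s
        have hm' : l.getD (i + 1) 0 % s < s := Nat.mod_lt _ hs0
        have hmm : l.getD i 0 % s < s := Nat.mod_lt _ hs0
        have hkk : l.getD (i + 1) 0 / s < l.getD i 0 / s := by
          by_contra hcon
          push_neg at hcon
          have := Nat.mul_le_mul_left s hcon
          omega
        have hi1L : i + 1 < l.length := by
          have hmem : (gamOf s l).getD j 0 ∈ gamOf s l := gam_mem_iff.2 ⟨j, hj, rfl⟩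
          have := (gamOf_mem.1 hmem).2.1
          omega
        have hrti2 : rt ρ (gamOf s l) (i + 2) = l.getD (i + 1) 0 % s := rt_getD_lt hrem hi1L
        have hsk : s * Ac ρ (gamOf s l) (i + 2) ≤ s * (l.getD (i + 1) 0 / s) := by omega
        have hsk2 : s * (l.getD (i + 1) 0 / s) + s ≤ s * (l.getD i 0 / s) := by
          have h5 := Nat.mul_le_mul_left s
            (show l.getD (i + 1) 0 / s + 1 ≤ l.getD i 0 / s by omega)
          rw [Nat.mul_add, Nat.mul_one] at h5
          omega
        rw [hrti, hAe, Nat.mul_add, Nat.mul_one]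
        omega
      · have hAe : Ac ρ (gamOf s l) (i + 1) = Ac ρ (gamOf s l) (i + 2) := by
          rw [hA, if_neg he, add_zero]
        have hle2 : s * Ac ρ (gamOf s l) (i + 2) ≤ s * (l.getD i 0 / s) := by
          have h1 : s * Ac ρ (gamOf s l) (i + 2) ≤ l.getD i 0 := le_trans hsA2 hmono
          have h2 : Ac ρ (gamOf s l) (i + 2) ≤ l.getD i 0 / s := by
            rw [Nat.le_div_iff_mul_le hs0, Nat.mul_comm]
            exact h1
          exact Nat.mul_le_mul_left s h2
        rw [hrti, hAe]
        omega

end reconB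
section reconC
variable {s : ℕ} {ρ l : List ℕ} {t j i : ℕ}

def muv (s : ℕ) (ρ l : List ℕ) (i : ℕ) : ℕ :=
  l.getD i 0 - rt ρ (gamOf s l) (i + 1) - s * Ac ρ (gamOf s l) (i + 1)

lemma muv_zero_ge (hi : l.length ≤ i) : muv s ρ l i = 0 := by
  unfold muv; rw [List.getD_eq_default _ _ hi]; omega

lemma muv_eq (hl : IsPartition l) (hrem : partRem s l = ρ)
    (hρ1 : ∀ x ∈ ρ, 1 ≤ x ∧ x ≤ s - 1) (hs2 : 2 ≤ s) (i : ℕ) :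
    l.getD i 0 = muv s ρ l i + rt ρ (gamOf s l) (i + 1) + s * Ac ρ (gamOf s l) (i + 1) := by
  have := key_ineq hl hrem hρ1 hs2 i
  unfold muv
  omega

lemma muv_dvd (hl : IsPartition l) (hrem : partRem s l = ρ)
    (hρ1 : ∀ x ∈ ρ, 1 ≤ x ∧ x ≤ s - 1) (hs2 : 2 ≤ s) (i : ℕ) :
    s ∣ muv s ρ l i := by
  rcases lt_or_ge i l.length with hi | hi
  · have hk := key_ineq hl hrem hρ1 hs2 i
    have hrti : rt ρ (gamOf s l) (i + 1) = l.getD i 0 % s := rt_getD_lt hrem hi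
    have hdm := Nat.div_add_mod (l.getD i 0) s
    have hA1 : Ac ρ (gamOf s l) (i + 1) ≤ l.getD i 0 / s := by
      rw [Nat.le_div_iff_mul_le (by omega), Nat.mul_comm]; omega
    obtain ⟨d, hd⟩ : ∃ d, l.getD i 0 / s = Ac ρ (gamOf s l) (i + 1) + d :=
      ⟨l.getD i 0 / s - Ac ρ (gamOf s l) (i + 1), by omega⟩
    refine ⟨d, ?_⟩
    unfold muv
    rw [hrti]
    have h2 : s * (l.getD i 0 / s) = s * Ac ρ (gamOf s l) (i + 1) + s * d := by
      rw [hd, Nat.mul_add]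
    omega
  · rw [muv_zero_ge hi]; exact dvd_zero s

lemma muv_anti (hl : IsPartition l) (hrem : partRem s l = ρ)
    (hρ1 : ∀ x ∈ ρ, 1 ≤ x ∧ x ≤ s - 1) (hs2 : 2 ≤ s) (i : ℕ) :
    muv s ρ l (i + 1) ≤ muv s ρ l i := by
  rcases le_or_gt l.length (i + 1) with hi | hi
  · rw [muv_zero_ge hi]; omega
  · have hiL : i < l.length := by omega
    obtain ⟨a, ha⟩ := muv_dvd hl hrem hρ1 hs2 (l := l) i
    obtain ⟨b, hb⟩ := muv_dvd hl hrem hρ1 hs2 (l := l) (i + 1)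
    have h1 := muv_eq hl hrem hρ1 hs2 (l := l) i
    have h2 := muv_eq hl hrem hρ1 hs2 (l := l) (i + 1)
    simp only [show i + 1 + 1 = i + 2 from rfl] at h2
    have hrt1 : rt ρ (gamOf s l) (i + 1) = l.getD i 0 % s := rt_getD_lt hrem hiL
    have hrt2 : rt ρ (gamOf s l) (i + 2) = l.getD (i + 1) 0 % s := rt_getD_lt hrem hi
    have hmono : l.getD (i + 1) 0 ≤ l.getD i 0 := getD_anti hl.1 (by omega)
    have hA := Ac_succ (ρ := ρ) (γ := gamOf s l) (t := i + 1) gamOf_sorted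
    rw [show i + 1 + 1 = i + 2 from rfl] at hA
    have hu : l.getD i 0 % s < s := Nat.mod_lt _ (by omega)
    have hu' : l.getD (i + 1) 0 % s < s := Nat.mod_lt _ (by omega)
    rw [ha, hb]
    apply Nat.mul_le_mul_left
    by_cases he : ∃ j, j < (gamOf s l).length ∧ (gamOf s l).getD j 0 = i + 2 ∧
        dseq ρ (gamOf s l) j = 1
    · obtain ⟨j, hj, hg, hd⟩ := he
      have hAe : Ac ρ (gamOf s l) (i + 1) = Ac ρ (gamOf s l) (i + 2) + 1 := by
        rw [hA, if_pos ⟨j, hj, hg, hd⟩]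
      have hul : l.getD i 0 % s < l.getD (i + 1) 0 % s := e_one_lt hl hrem hρ1 hs2 hj hg hd
      rw [hAe, Nat.mul_add, Nat.mul_one] at h1
      have hlt : s * b < s * (a + 1) := by
        rw [Nat.mul_add, Nat.mul_one]
        omega
      have := Nat.lt_of_mul_lt_mul_left hlt
      omega
    · have hAe : Ac ρ (gamOf s l) (i + 1) = Ac ρ (gamOf s l) (i + 2) := by
        rw [hA, if_neg he, add_zero]
      rw [hAe] at h1
      have hlt : s * b < s * (a + 1) := by
        rw [Nat.mul_add, Nat.mul_one]
        omega
      have := Nat.lt_of_mul_lt_mul_left hlt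
      omega

def Kof (s : ℕ) (ρ l : List ℕ) : ℕ :=
  Nat.find (⟨l.length, muv_zero_ge le_rfl⟩ : ∃ i, muv s ρ l i = 0)

lemma Kof_le : Kof s ρ l ≤ l.length := Nat.find_min' _ (muv_zero_ge le_rfl)

lemma muv_ne_lt (hi : i < Kof s ρ l) : muv s ρ l i ≠ 0 := by
  unfold Kof at hi
  exact Nat.find_min (⟨l.length, muv_zero_ge le_rfl⟩ : ∃ i, muv s ρ l i = 0) hi

lemma muv_zero_geK (hl : IsPartition l) (hrem : partRem s l = ρ)
    (hρ1 : ∀ x ∈ ρ, 1 ≤ x ∧ x ≤ s - 1) (hs2 : 2 ≤ s) (hi : Kof s ρ l ≤ i) :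
    muv s ρ l i = 0 := by
  have hanti : Antitone (muv s ρ l) := antitone_nat_of_succ_le (muv_anti hl hrem hρ1 hs2)
  have h1 := hanti hi
  have h2 : muv s ρ l (Kof s ρ l) = 0 := by
    unfold Kof
    exact Nat.find_spec (⟨l.length, muv_zero_ge le_rfl⟩ : ∃ i, muv s ρ l i = 0)
  omega

def muOf (s : ℕ) (ρ l : List ℕ) : List ℕ := (List.range (Kof s ρ l)).map (muv s ρ l)

lemma muOf_len : (muOf s ρ l).length = Kof s ρ l := by simp [muOf]

lemma muOf_getD (hl : IsPartition l) (hrem : partRem s l = ρ)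
    (hρ1 : ∀ x ∈ ρ, 1 ≤ x ∧ x ≤ s - 1) (hs2 : 2 ≤ s) (i : ℕ) :
    (muOf s ρ l).getD i 0 = muv s ρ l i := by
  rcases lt_or_ge i (Kof s ρ l) with h | h
  · rw [List.getD_eq_getElem _ _ (by simp [muOf_len]; omega)]
    simp [muOf]
  · rw [List.getD_eq_default _ _ (by rw [muOf_len]; omega),
      muv_zero_geK hl hrem hρ1 hs2 h]

lemma muOf_sorted (hl : IsPartition l) (hrem : partRem s l = ρ)
    (hρ1 : ∀ x ∈ ρ, 1 ≤ x ∧ x ≤ s - 1) (hs2 : 2 ≤ s) :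
    (muOf s ρ l).Pairwise (· ≥ ·) := by
  have hanti : Antitone (muv s ρ l) := antitone_nat_of_succ_le (muv_anti hl hrem hρ1 hs2)
  refine List.pairwise_iff_getElem.mpr ?_
  intro a b ha hb hab
  unfold muOf at ha hb ⊢
  simp only [List.getElem_map, List.getElem_range, List.length_map, List.length_range] at *
  exact hanti (le_of_lt hab)

lemma muOf_pos : ∀ x ∈ muOf s ρ l, 0 < x := by
  intro x hx
  unfold muOf at hx
  rw [List.mem_map] at hx
  obtain ⟨i, hi, rfl⟩ := hx
  rw [List.mem_range] at hi
  have := muv_ne_lt hi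
  omega

lemma muOf_dvd (hl : IsPartition l) (hrem : partRem s l = ρ)
    (hρ1 : ∀ x ∈ ρ, 1 ≤ x ∧ x ≤ s - 1) (hs2 : 2 ≤ s) :
    ∀ x ∈ muOf s ρ l, s ∣ x := by
  intro x hx
  unfold muOf at hx
  rw [List.mem_map] at hx
  obtain ⟨i, -, rfl⟩ := hx
  exact muv_dvd hl hrem hρ1 hs2 i

lemma Lg_eq (hl : IsPartition l) (hrem : partRem s l = ρ)
    (hρ1 : ∀ x ∈ ρ, 1 ≤ x ∧ x ≤ s - 1) (hs2 : 2 ≤ s) (hl0 : l ≠ []) :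
    Lg (gamOf s l) (muOf s ρ l) = l.length := by
  have hlen0 : 0 < l.length := List.length_pos_iff.2 hl0
  have h1 : (gamOf s l).getD ((gamOf s l).length - 1) 0 ≤ l.length := gamOf_last_le
  have h2 : (muOf s ρ l).length ≤ l.length := by rw [muOf_len]; exact Kof_le
  apply le_antisymm (max_le h1 h2)
  rcases eq_or_lt_of_le (Kof_le (s := s) (ρ := ρ) (l := l)) with he | hlt
  · rw [← he, ← muOf_len]; exact le_max_right _ _
  · have hz : muv s ρ l (l.length - 1) = 0 := muv_zero_geK hl hrem hρ1 hs2 (by omega)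
    have hAz : Ac ρ (gamOf s l) (l.length - 1 + 1) = 0 := Ac_zero_ge (by omega)
    have heq := muv_eq hl hrem hρ1 hs2 (l := l) (l.length - 1)
    have hrt : rt ρ (gamOf s l) (l.length - 1 + 1) = l.getD (l.length - 1) 0 % s :=
      rt_getD_lt hrem (by omega)
    have hpos : 0 < l.getD (l.length - 1) 0 := by
      rw [List.getD_eq_getElem _ _ (by omega)]
      exact hl.2 _ (List.getElem_mem _)
    rw [hz, hAz, hrt, Nat.mul_zero, Nat.add_zero, Nat.zero_add] at heq
    have hmem : l.length ∈ gamOf s l := by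
      rw [gamOf_mem]
      refine ⟨by omega, le_rfl, ?_⟩
      omega
    have := gam_mem_le_last gamOf_sorted hmem
    exact le_trans this (le_max_left _ _)

lemma gmap_recon (hl : IsPartition l) (hrem : partRem s l = ρ)
    (hρ1 : ∀ x ∈ ρ, 1 ≤ x ∧ x ≤ s - 1) (hs2 : 2 ≤ s) (hl0 : l ≠ [])
    (hm : 1 ≤ ρ.length) :
    gmap s ρ (gamOf s l) (muOf s ρ l) = l := by
  have hgetD : ∀ i, (gmap s ρ (gamOf s l) (muOf s ρ l)).getD i 0 = l.getD i 0 := by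
    intro i
    rw [gmap_getD gamOf_sorted (gamOf_len hrem) i]
    unfold gv
    rw [muOf_getD hl hrem hρ1 hs2 i]
    have h3 := muv_eq hl hrem hρ1 hs2 (l := l) i
    omega
  have hmγ : 1 ≤ (gamOf s l).length := by rw [gamOf_len hrem]; exact hm
  have hpart := gmap_partition gamOf_sorted gamOf_pos (gamOf_len hrem) hρ1 hs2
    (muOf_sorted hl hrem hρ1 hs2) muOf_pos hmγ
  exact mu_eq_of_getD hpart.2 hl.2 hgetD

end reconC

section final
variable {s : ℕ}

lemma cond_iff (hs2 : 2 ≤ s) (μ : List ℕ) (c r g m : ℕ) :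
    ((μ = [] ∧ c = 0 ∧ r = g - m) ∨
     (μ ≠ [] ∧ c = μ.headD 0 / s ∧ r = max g μ.length - m))
    ↔ (c = μ.headD 0 / s ∧ r = max g μ.length - m) := by
  by_cases h : μ = []
  · subst h
    simp [Nat.zero_div]
  · simp [h]

lemma forward_mem (s m : ℕ) (hm : 1 ≤ m) (ρ : List ℕ) (hρlen : ρ.length = m)
    (hρ : ∀ x ∈ ρ, 1 ≤ x ∧ x ≤ s - 1) (hs2 : 2 ≤ s) (n r c : ℕ)
    (γ μ : List ℕ)
    (h : γ.Pairwise (· < ·) ∧ (∀ x ∈ γ, 0 < x) ∧ γ.length = m ∧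
        IsPartition μ ∧ (∀ x ∈ μ, s ∣ x) ∧
        n = μ.sum + ρ.sum + s * ∑ j ∈ Finset.range m, dseq ρ γ j * (γ.getD j 0 - 1) ∧
        ((μ = [] ∧ c = 0 ∧ r = γ.getD (m - 1) 0 - m) ∨
         (μ ≠ [] ∧ c = μ.headD 0 / s ∧ r = max (γ.getD (m - 1) 0) μ.length - m))) :
    IsPartition (gmap s ρ γ μ) ∧ (gmap s ρ γ μ).sum = n ∧ partRem s (gmap s ρ γ μ) = ρ ∧
      partRs s (gmap s ρ γ μ) = r ∧ partCs s (gmap s ρ γ μ) = c := by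
  obtain ⟨hγs, hγp, hγlen, hμpart, hμdvd, hsum, hcond⟩ := h
  have hlen : γ.length = ρ.length := by rw [hγlen, hρlen]
  have hmγ : 1 ≤ γ.length := by omega
  have hcnd := (cond_iff hs2 μ c r (γ.getD (m - 1) 0) m).1 hcond
  refine ⟨gmap_partition hγs hγp hlen hρ hs2 hμpart.1 hμpart.2 hmγ, ?_,
    gmap_partRem hγs hγp hlen hρ hs2 hμdvd, ?_, ?_⟩
  · rw [gmap_sum hγs hγp hlen, hγlen]
    exact hsum.symm
  · rw [gmap_partRs hγs hγp hlen hρ hs2 hμdvd]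
    unfold Lg
    rw [hγlen]
    exact hcnd.2.symm
  · rw [gmap_partCs hγs hγp hlen hρ hs2 hμpart.1 hμpart.2 hμdvd hmγ]
    exact hcnd.1.symm

lemma backward_mem (s m : ℕ) (hm : 1 ≤ m) (ρ : List ℕ) (hρlen : ρ.length = m)
    (hρ : ∀ x ∈ ρ, 1 ≤ x ∧ x ≤ s - 1) (hs2 : 2 ≤ s) (n r c : ℕ) (hn : 1 ≤ n)
    (l : List ℕ)
    (h : IsPartition l ∧ l.sum = n ∧ partRem s l = ρ ∧ partRs s l = r ∧ partCs s l = c) :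
    ((gamOf s l).Pairwise (· < ·) ∧ (∀ x ∈ gamOf s l, 0 < x) ∧ (gamOf s l).length = m ∧
        IsPartition (muOf s ρ l) ∧ (∀ x ∈ muOf s ρ l, s ∣ x) ∧
        n = (muOf s ρ l).sum + ρ.sum +
          s * ∑ j ∈ Finset.range m, dseq ρ (gamOf s l) j * ((gamOf s l).getD j 0 - 1) ∧
        ((muOf s ρ l = [] ∧ c = 0 ∧ r = (gamOf s l).getD (m - 1) 0 - m) ∨
         (muOf s ρ l ≠ [] ∧ c = (muOf s ρ l).headD 0 / s ∧
           r = max ((gamOf s l).getD (m - 1) 0) (muOf s ρ l).length - m))) ∧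
      gmap s ρ (gamOf s l) (muOf s ρ l) = l := by
  obtain ⟨hl, hsum, hrem, hrs, hcs⟩ := h
  have hl0 : l ≠ [] := by intro hc; rw [hc] at hsum; simp at hsum; omega
  have hmρ : 1 ≤ ρ.length := by omega
  have hrecon := gmap_recon hl hrem hρ hs2 hl0 hmρ
  have hγlen : (gamOf s l).length = m := by rw [gamOf_len hrem, hρlen]
  have hlen : (gamOf s l).length = ρ.length := gamOf_len hrem
  have hmγ : 1 ≤ (gamOf s l).length := by omega
  refine ⟨⟨gamOf_sorted, gamOf_pos, hγlen, ⟨muOf_sorted hl hrem hρ hs2, muOf_pos⟩,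
    muOf_dvd hl hrem hρ hs2, ?_, ?_⟩, hrecon⟩
  · have hgs := gmap_sum (s := s) (μ := muOf s ρ l) gamOf_sorted gamOf_pos hlen
    rw [hrecon, hγlen] at hgs
    omega
  · apply (cond_iff hs2 _ c r ((gamOf s l).getD (m - 1) 0) m).2
    have h5 := gmap_partCs gamOf_sorted gamOf_pos hlen hρ hs2
      (muOf_sorted hl hrem hρ hs2) muOf_pos (muOf_dvd hl hrem hρ hs2) hmγ
    rw [hrecon] at h5
    have h6 := gmap_partRs gamOf_sorted gamOf_pos hlen hρ hs2 (muOf_dvd hl hrem hρ hs2)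
    rw [hrecon] at h6
    unfold Lg at h6
    rw [hγlen] at h6
    constructor
    · rw [← hcs, h5]
    · rw [← hrs, h6]

end final

theorem stmt10 (s m : ℕ) (hs : 0 < s) (hm : 1 ≤ m) (ρ : List ℕ)
    (hρlen : ρ.length = m) (hρ : ∀ x ∈ ρ, 1 ≤ x ∧ x ≤ s - 1)
    (n r c : ℕ) (hn : 1 ≤ n) :
    Nat.card {l : List ℕ // IsPartition l ∧ l.sum = n ∧ partRem s l = ρ ∧
        partRs s l = r ∧ partCs s l = c} =
    Nat.card {p : List ℕ × List ℕ //
        p.1.Pairwise (· < ·) ∧ (∀ x ∈ p.1, 0 < x) ∧ p.1.length = m ∧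
        IsPartition p.2 ∧ (∀ x ∈ p.2, s ∣ x) ∧
        n = p.2.sum + ρ.sum +
          s * ∑ j ∈ Finset.range m, dseq ρ p.1 j * (p.1.getD j 0 - 1) ∧
        ((p.2 = [] ∧ c = 0 ∧ r = p.1.getD (m - 1) 0 - m) ∨
         (p.2 ≠ [] ∧ c = p.2.headD 0 / s ∧
           r = max (p.1.getD (m - 1) 0) p.2.length - m))} := by
  have hs2 : 2 ≤ s := by
    have hne : ρ ≠ [] := by
      intro hc
      rw [hc] at hρlen
      simp at hρlen
      omega
    obtain ⟨x, hx⟩ := List.exists_mem_of_ne_nil ρ hne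
    have := hρ x hx
    omega
  symm
  apply Nat.card_eq_of_bijective (f := fun p => ⟨gmap s ρ p.1.1 p.1.2,
    forward_mem s m hm ρ hρlen hρ hs2 n r c p.1.1 p.1.2 p.2⟩)
  constructor
  · rintro ⟨⟨γ1, μ1⟩, h1⟩ ⟨⟨γ2, μ2⟩, h2⟩ heq
    simp only [Subtype.mk.injEq] at heq
    obtain ⟨hγs1, hγp1, hγlen1, hμp1, hμd1, -, -⟩ := h1
    obtain ⟨hγs2, hγp2, hγlen2, hμp2, hμd2, -, -⟩ := h2
    have hres := gmap_inj hγs1 hγp1 (by rw [hγlen1, hρlen]) hρ hs2 hμp1.2 hμd1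
      hγs2 hγp2 (by rw [hγlen2, hρlen]) hμp2.2 hμd2 heq
    apply Subtype.ext
    have ha : γ1 = γ2 := hres.1
    have hb : μ1 = μ2 := hres.2
    subst ha
    subst hb
    rfl
  · rintro ⟨l, hl⟩
    have hb := backward_mem s m hm ρ hρlen hρ hs2 n r c hn l hl
    exact ⟨⟨(gamOf s l, muOf s ρ l), hb.1⟩, Subtype.ext hb.2⟩
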